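/- Let a, b ∈ Sym(n,F) over an ordered field, parametrizing Lagrangians in the chart of l_∞, and let x_1,...,x_k be symmetric matrices with 0 ≪ x_1 ≪ x_2 ≪ ... ≪ x_k (each difference positive definite). With the norm ‖·‖ from an order-compatible valuation, Σ_{i=1}^{k−1} sqrt(Σ_j (ln‖λ_j^{(i)}‖)²) ≤ √n · sqrt(Σ_j (ln‖μ_j‖)²), where λ_j^{(i)} are the eigenvalues of x_i^{-1/2} x_{i+1} x_i^{-1/2} and μ_j are the eigenvalues of x_1^{-1/2} x_k x_1^{-1/2}; equivalently, using det R(0, x_1, x_k, l_∞) = Π_{i} det R(0, x_i, x_{i+1}, l_∞), the sum of the 'distances' between consecutive projections is at most √n times the distance between the endpoints. -/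

import Mathlib

open Matrix Polynomial

/-- A symmetric positive definite matrix over an ordered field. -/
def IsPosDefM {F : Type*} [Field F] [LinearOrder F] [IsStrictOrderedRing F] {n : ℕ}
    (Y : Matrix (Fin n) (Fin n) F) : Prop :=
  Yᵀ = Y ∧ ∀ v : Fin n → F, v ≠ 0 → 0 < v ⬝ᵥ Y.mulVec v

section aux
variable {F : Type*} [Field F] [LinearOrder F] [IsStrictOrderedRing F] {n : ℕ}

lemma IsPosDefM.det_ne_zero' {M : Matrix (Fin n) (Fin n) F} (h : IsPosDefM M) :
    M.det ≠ 0 := by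
  intro h0
  obtain ⟨v, hv, hMv⟩ := (Matrix.exists_mulVec_eq_zero_iff).2 h0
  have := h.2 v hv
  rw [hMv] at this
  simp at this

lemma charpoly_eval' (M : Matrix (Fin n) (Fin n) F) (t : F) :
    (M.charpoly).eval t = (t • (1 : Matrix (Fin n) (Fin n) F) - M).det := by
  rw [Matrix.charpoly, ← Polynomial.coe_evalRingHom, RingHom.map_det]
  congr 1
  ext i j
  by_cases h : i = j <;>
    simp [charmatrix_apply, Matrix.diagonal_apply, Matrix.one_apply, Matrix.map_apply,
      Matrix.sub_apply, Matrix.smul_apply, h]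

lemma dotProduct_self_nonneg' (v : Fin n → F) : 0 ≤ v ⬝ᵥ v :=
  Finset.sum_nonneg fun i _ => mul_self_nonneg _

lemma posdef_congr {M B : Matrix (Fin n) (Fin n) F} (hM : IsPosDefM M)
    (hB : Bᵀ = B) (hBdet : B.det ≠ 0) : IsPosDefM (B * M * B) := by
  constructor
  · rw [Matrix.transpose_mul, Matrix.transpose_mul, hB, hM.1, Matrix.mul_assoc]
  · intro v hv
    have hw : B *ᵥ v ≠ 0 := by
      intro hw
      exact hBdet (Matrix.exists_mulVec_eq_zero_iff.1 ⟨v, hv, hw⟩)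
    have : v ⬝ᵥ (B * M * B) *ᵥ v = (B *ᵥ v) ⬝ᵥ M *ᵥ (B *ᵥ v) := by
      rw [← Matrix.mulVec_mulVec, ← Matrix.mulVec_mulVec,
        Matrix.dotProduct_mulVec v B, ← Matrix.mulVec_transpose, hB]
    rw [this]
    exact hM.2 _ hw

lemma root_gt_one {A : Matrix (Fin n) (Fin n) F} (hsym : Aᵀ = A)
    (hA : IsPosDefM (A - 1)) (f : Fin n → F)
    (h : A.charpoly = ∏ j, (X - C (f j))) (j : Fin n) : 1 < f j := by
  by_contra hle
  push_neg at hle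
  have heval : (A.charpoly).eval (f j) = 0 := by
    rw [h, Polynomial.eval_prod]
    exact Finset.prod_eq_zero (Finset.mem_univ j) (by simp)
  rw [charpoly_eval'] at heval
  have hpd : IsPosDefM (A - f j • 1) := by
    constructor
    · rw [Matrix.transpose_sub, hsym, Matrix.transpose_smul, Matrix.transpose_one]
    · intro v hv
      have h1 := hA.2 v hv
      have e1 : v ⬝ᵥ (A - 1) *ᵥ v = v ⬝ᵥ A *ᵥ v - v ⬝ᵥ v := by
        rw [Matrix.sub_mulVec, dotProduct_sub, Matrix.one_mulVec]
      have e2 : v ⬝ᵥ (A - f j • 1) *ᵥ v = v ⬝ᵥ A *ᵥ v - f j * (v ⬝ᵥ v) := by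
        rw [Matrix.sub_mulVec, dotProduct_sub, Matrix.smul_mulVec,
          Matrix.one_mulVec, dotProduct_smul, smul_eq_mul]
      rw [e2]
      rw [e1] at h1
      nlinarith [dotProduct_self_nonneg' v]
  have : (A - f j • 1).det ≠ 0 := hpd.det_ne_zero'
  apply this
  have : f j • (1 : Matrix (Fin n) (Fin n) F) - A = -(A - f j • 1) := (neg_sub _ _).symm
  rw [this, Matrix.det_neg] at heval
  rcases mul_eq_zero.1 heval with h' | h'
  · exact absurd h' (pow_ne_zero _ (by norm_num))
  · exact h'

lemma det_eq_prod_of_charpoly {A : Matrix (Fin n) (Fin n) F} (f : Fin n → F)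
    (h : A.charpoly = ∏ j, (X - C (f j))) : A.det = ∏ j, f j := by
  have := congrArg (Polynomial.eval 0) h
  rw [charpoly_eval', Polynomial.eval_prod] at this
  simp only [zero_smul, zero_sub, Matrix.det_neg, Polynomial.eval_sub,
    Polynomial.eval_X, Polynomial.eval_C, zero_sub] at this
  have hprod : (∏ j, (-(f j))) = (-1 : F) ^ (Fintype.card (Fin n)) * ∏ j, f j := by
    rw [← Finset.card_univ, ← Finset.prod_const, ← Finset.prod_mul_distrib]
    simp
  rw [hprod] at this
  exact mul_left_cancel₀ (pow_ne_zero _ (by norm_num)) this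


end aux

/-- Let `F` be an ordered field with multiplicative order-compatible
norm `N` coming from a valuation.  Let `x 0 ≪ x 1 ≪ ⋯ ≪ x k` be positive definite
symmetric matrices (consecutive differences positive definite), `r i` the positive
definite square root of `x i`, `λ i j` the eigenvalues of `(r i)⁻¹ x (i+1) (r i)⁻¹` and
`μ j` the eigenvalues of `(r 0)⁻¹ x k (r 0)⁻¹` (encoded by splittings of the
characteristic polynomials).  Then the sum of the distances between consecutive
projections is at most `√n` times the distance between the endpoints:
`Σ_{i<k} sqrt(Σⱼ (ln‖λ i j‖)²) ≤ √n · sqrt(Σⱼ (ln‖μ j‖)²)`. -/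
theorem sum_consecutive_distances_le (F : Type*) [Field F] [LinearOrder F] [IsStrictOrderedRing F]
    (N : F → ℝ) (hN0 : ∀ x, 0 ≤ N x) (hN1 : N 1 = 1)
    (hNmul : ∀ x y, N (x * y) = N x * N y)
    (hNmono : ∀ x y : F, 0 < x → x ≤ y → N x ≤ N y)
    (n k : ℕ)
    (x : ℕ → Matrix (Fin n) (Fin n) F)
    (hx : ∀ i ≤ k, IsPosDefM (x i))
    (hdiff : ∀ i < k, IsPosDefM (x (i + 1) - x i))
    (r : ℕ → Matrix (Fin n) (Fin n) F)
    (hr : ∀ i ≤ k, IsPosDefM (r i) ∧ r i * r i = x i)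
    (lam : ℕ → Fin n → F)
    (hlam : ∀ i < k, ((r i)⁻¹ * x (i + 1) * (r i)⁻¹).charpoly =
      ∏ j, (Polynomial.X - Polynomial.C (lam i j)))
    (mu : Fin n → F)
    (hmu : ((r 0)⁻¹ * x k * (r 0)⁻¹).charpoly =
      ∏ j, (Polynomial.X - Polynomial.C (mu j))) :
    ∑ i ∈ Finset.range k, Real.sqrt (∑ j, (Real.log (N (lam i j))) ^ 2) ≤
      Real.sqrt n * Real.sqrt (∑ j, (Real.log (N (mu j))) ^ 2) := by
  classical
  -- norm facts
  let NM : F →* ℝ := ⟨⟨N, hN1⟩, fun a b => hNmul a b⟩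
  have hNne : ∀ a : F, a ≠ 0 → N a ≠ 0 := by
    intro a ha h0
    have h := hNmul a a⁻¹
    rw [mul_inv_cancel₀ ha, hN1, h0, zero_mul] at h
    exact one_ne_zero h
  have hNinv : ∀ a : F, a ≠ 0 → N a⁻¹ = (N a)⁻¹ := by
    intro a ha
    refine eq_inv_of_mul_eq_one_left ?_
    rw [← hNmul, inv_mul_cancel₀ ha, hN1]
  set c : ℕ → ℝ := fun i => Real.log (N ((x i).det)) with hc
  -- generic eigenvalue-log computation
  have hgen : ∀ i ≤ k, ∀ m ≤ k, ∀ f : Fin n → F,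
      ((r i)⁻¹ * x m * (r i)⁻¹).charpoly = ∏ j, (Polynomial.X - Polynomial.C (f j)) →
      ∑ j, Real.log (N (f j)) = c m - c i := by
    intro i hik m hmk f hf
    obtain ⟨hri, hrsq⟩ := hr i hik
    have hrdet : (r i).det ≠ 0 := hri.det_ne_zero'
    have hxidet : (x i).det ≠ 0 := (hx i hik).det_ne_zero'
    have hxmdet : (x m).det ≠ 0 := (hx m hmk).det_ne_zero'
    have hdetA : ((r i)⁻¹ * x m * (r i)⁻¹).det = ∏ j, f j :=
      det_eq_prod_of_charpoly _ hf
    have hdetA2 : ((r i)⁻¹ * x m * (r i)⁻¹).det = (x m).det * ((x i).det)⁻¹ := by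
      rw [Matrix.det_mul, Matrix.det_mul, Matrix.det_nonsing_inv, Ring.inverse_eq_inv',
        ← hrsq, Matrix.det_mul]
      have : (r i).det ≠ 0 := hrdet
      field_simp
    have hprodne : (∏ j, f j) ≠ 0 := by
      rw [← hdetA, hdetA2]
      exact mul_ne_zero hxmdet (inv_ne_zero hxidet)
    have hfne : ∀ j : Fin n, f j ≠ 0 := by
      intro j hj
      exact hprodne (Finset.prod_eq_zero (Finset.mem_univ j) hj)
    have h1 : N (∏ j, f j) = ∏ j, N (f j) := map_prod NM f Finset.univ
    have h2 : Real.log (∏ j, N (f j)) = ∑ j, Real.log (N (f j)) :=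
      Real.log_prod (fun j _ => hNne _ (hfne j))
    have h3 : N (∏ j, f j) = N ((x m).det) * (N ((x i).det))⁻¹ := by
      rw [← hdetA, hdetA2, hNmul, hNinv _ hxidet]
    rw [← h2, ← h1, h3, Real.log_mul (hNne _ hxmdet) (inv_ne_zero (hNne _ hxidet)),
      Real.log_inv]
    simp only [hc]
    ring
  -- per-step inequality
  have hstep : ∀ i < k, Real.sqrt (∑ j, (Real.log (N (lam i j))) ^ 2) ≤ c (i + 1) - c i := by
    intro i hi
    obtain ⟨hri, hrsq⟩ := hr i hi.le
    have hrdet : (r i).det ≠ 0 := hri.det_ne_zero'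
    have hrunit : IsUnit (r i).det := isUnit_iff_ne_zero.2 hrdet
    have hrinvT : ((r i)⁻¹)ᵀ = (r i)⁻¹ := by rw [Matrix.transpose_nonsing_inv, hri.1]
    have hrinvdet : ((r i)⁻¹).det ≠ 0 := by
      rw [Matrix.det_nonsing_inv, Ring.inverse_eq_inv']
      exact inv_ne_zero hrdet
    have hAsym : ((r i)⁻¹ * x (i + 1) * (r i)⁻¹)ᵀ = (r i)⁻¹ * x (i + 1) * (r i)⁻¹ := by
      rw [Matrix.transpose_mul, Matrix.transpose_mul, hrinvT, (hx (i + 1) hi).1,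
        Matrix.mul_assoc]
    have hone : (r i)⁻¹ * x i * (r i)⁻¹ = 1 := by
      rw [← hrsq, ← Matrix.mul_assoc, Matrix.nonsing_inv_mul _ hrunit, Matrix.one_mul,
        Matrix.mul_nonsing_inv _ hrunit]
    have hsub : (r i)⁻¹ * x (i + 1) * (r i)⁻¹ - 1 =
        (r i)⁻¹ * (x (i + 1) - x i) * (r i)⁻¹ := by
      rw [Matrix.mul_sub, Matrix.sub_mul, hone]
    have hpd1 : IsPosDefM ((r i)⁻¹ * x (i + 1) * (r i)⁻¹ - 1) := by
      rw [hsub]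
      exact posdef_congr (hdiff i hi) hrinvT hrinvdet
    have hgt : ∀ j, 1 < lam i j := root_gt_one hAsym hpd1 _ (hlam i hi)
    have hlog0 : ∀ j : Fin n, 0 ≤ Real.log (N (lam i j)) := by
      intro j
      apply Real.log_nonneg
      rw [← hN1]
      exact hNmono 1 (lam i j) one_pos (hgt j).le
    have hkey : ∑ j, Real.log (N (lam i j)) = c (i + 1) - c i :=
      hgen i hi.le (i + 1) hi (lam i) (hlam i hi)
    calc Real.sqrt (∑ j, (Real.log (N (lam i j))) ^ 2)
        ≤ Real.sqrt ((∑ j, Real.log (N (lam i j))) ^ 2) :=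
          Real.sqrt_le_sqrt (Finset.sum_sq_le_sq_sum_of_nonneg (fun j _ => hlog0 j))
      _ = ∑ j, Real.log (N (lam i j)) :=
          Real.sqrt_sq (Finset.sum_nonneg fun j _ => hlog0 j)
      _ = c (i + 1) - c i := hkey
  have hmusum : ∑ j, Real.log (N (mu j)) = c k - c 0 :=
    hgen 0 (Nat.zero_le k) k le_rfl mu hmu
  have hCS : ∑ j, Real.log (N (mu j)) ≤
      Real.sqrt n * Real.sqrt (∑ j, (Real.log (N (mu j))) ^ 2) := by
    have h2 : (∑ j, Real.log (N (mu j))) ^ 2 ≤ (n : ℝ) * ∑ j, (Real.log (N (mu j))) ^ 2 := by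
      have := sq_sum_le_card_mul_sum_sq (s := (Finset.univ : Finset (Fin n)))
        (f := fun j => Real.log (N (mu j)))
      simpa using this
    calc ∑ j, Real.log (N (mu j)) ≤ |∑ j, Real.log (N (mu j))| := le_abs_self _
      _ = Real.sqrt ((∑ j, Real.log (N (mu j))) ^ 2) := (Real.sqrt_sq_eq_abs _).symm
      _ ≤ Real.sqrt ((n : ℝ) * ∑ j, (Real.log (N (mu j))) ^ 2) := Real.sqrt_le_sqrt h2
      _ = Real.sqrt n * Real.sqrt (∑ j, (Real.log (N (mu j))) ^ 2) :=
          Real.sqrt_mul (by positivity) _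
  calc ∑ i ∈ Finset.range k, Real.sqrt (∑ j, (Real.log (N (lam i j))) ^ 2)
      ≤ ∑ i ∈ Finset.range k, (c (i + 1) - c i) :=
        Finset.sum_le_sum fun i hi => hstep i (Finset.mem_range.1 hi)
    _ = c k - c 0 := Finset.sum_range_sub c k
    _ = ∑ j, Real.log (N (mu j)) := hmusum.symm
    _ ≤ _ := hCS
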